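/- Let A and B be finitely generated groups and G = A × B. Then G_bound ⊆ A_bound × B_bound, i.e. every element (a,b) of G_bound satisfies a ∈ A_bound and b ∈ B_bound. -/
import Mathlib


/-- A finite symmetric generating set of a group. -/
def IsSymmGen {G : Type*} [Group G] (S : Finset G) : Prop :=
  (∀ s ∈ S, s⁻¹ ∈ S) ∧ Subgroup.closure (S : Set G) = ⊤

/-- The word length of `g` with respect to `S`: the least `n` such that
`g` is a product of `n` elements of `S`. -/
noncomputable def wordLen {G : Type*} [Group G] (S : Finset G) (g : G) : ℕ :=
  sInf {n : ℕ | ∃ w : List G, (∀ s ∈ w, s ∈ S) ∧ w.length = n ∧ w.prod = g}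

/-- Elements of uniformly bounded word length. -/
def GBound (G : Type*) [Group G] : Set G :=
  {g | ∃ M : ℕ, 0 < M ∧ ∀ S : Finset G, IsSymmGen S → wordLen S g ≤ M}

lemma exists_word {G : Type*} [Group G] {S : Finset G} (hS : IsSymmGen S) (g : G) :
    ∃ w : List G, (∀ s ∈ w, s ∈ S) ∧ w.prod = g := by
  have hg : g ∈ Subgroup.closure (S : Set G) := hS.2 ▸ Subgroup.mem_top g
  induction hg using Subgroup.closure_induction with
  | mem x hx => exact ⟨[x], by simpa using hx, by simp⟩
  | one => exact ⟨[], by simp, by simp⟩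
  | mul x y _ _ ihx ihy =>
      obtain ⟨w1, h1, h1p⟩ := ihx
      obtain ⟨w2, h2, h2p⟩ := ihy
      refine ⟨w1 ++ w2, ?_, by simp [h1p, h2p]⟩
      intro s hs
      rcases List.mem_append.1 hs with h | h
      exacts [h1 s h, h2 s h]
  | inv x _ ihx =>
      obtain ⟨w, h, hp⟩ := ihx
      refine ⟨(w.map (·⁻¹)).reverse, ?_, ?_⟩
      · intro s hs
        simp only [List.mem_reverse, List.mem_map] at hs
        obtain ⟨t, ht, rfl⟩ := hs
        exact hS.1 t (h t ht)
      · rw [← List.prod_inv_reverse, hp]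

lemma sInf_mem_wordset {G : Type*} [Group G] {S : Finset G} (hS : IsSymmGen S) (g : G) :
    wordLen S g ∈ {n : ℕ | ∃ w : List G, (∀ s ∈ w, s ∈ S) ∧ w.length = n ∧ w.prod = g} := by
  apply Nat.sInf_mem
  obtain ⟨w, hw, hp⟩ := exists_word hS g
  exact ⟨w.length, w, hw, rfl, hp⟩

lemma prod_filter_ne_one' {H : Type*} [Monoid H] [DecidableEq H] (l : List H) :
    (l.filter (fun x => x ≠ 1)).prod = l.prod := by
  induction l with
  | nil => simp
  | cons a t ih =>
      simp only [ne_eq, decide_not] at ih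
      by_cases ha : a = 1 <;> simp [List.filter_cons, ha, ih]

/-- Push a word through a hom landing in `insert 1 S`, filtering out the `1`s. -/
lemma wordLen_le_of_hom {G H : Type*} [Group G] [Group H] (φ : G →* H)
    (S' : Finset G) (S : Finset H) [DecidableEq H]
    (hφ : ∀ x ∈ S', φ x ∈ insert (1 : H) S)
    {g : G} {n : ℕ} (hw : ∃ w : List G, (∀ s ∈ w, s ∈ S') ∧ w.length = n ∧ w.prod = g) :
    wordLen S (φ g) ≤ n := by
  obtain ⟨w, hwS, hwl, hwp⟩ := hw
  set w' : List H := (w.map φ).filter (fun x => x ≠ 1) with hw'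
  have hmem : ∀ s ∈ w', s ∈ S := by
    intro s hs
    rw [hw', List.mem_filter] at hs
    obtain ⟨hs1, hs2⟩ := hs
    obtain ⟨t, ht, rfl⟩ := List.mem_map.1 hs1
    have := hφ t (hwS t ht)
    simp only [Finset.mem_insert] at this
    rcases this with h | h
    · simp [h] at hs2
    · exact h
  have hprod : w'.prod = φ g := by
    rw [hw', prod_filter_ne_one', ← hwp]
    exact w.prod_hom φ
  have hlen : w'.length ≤ n := by
    calc w'.length ≤ (w.map φ).length := List.length_filter_le _ _
    _ = n := by simp [hwl]
  exact le_trans (Nat.sInf_le ⟨w', hmem, rfl, hprod⟩) hlen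

lemma symmGen_of_FG (G : Type*) [Group G] [Group.FG G] :
    ∃ T : Finset G, IsSymmGen T := by
  classical
  obtain ⟨n, T₀, -, hT₀⟩ := Group.fg_iff'.mp ‹Group.FG G›
  refine ⟨T₀ ∪ T₀.image (·⁻¹), ?_, ?_⟩
  · intro s hs
    rcases Finset.mem_union.1 hs with h | h
    · exact Finset.mem_union_right _ (Finset.mem_image.2 ⟨s, h, rfl⟩)
    · obtain ⟨t, ht, rfl⟩ := Finset.mem_image.1 h
      rw [inv_inv]; exact Finset.mem_union_left _ ht
  · rw [eq_top_iff, ← hT₀]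
    exact Subgroup.closure_mono (Finset.coe_subset.2 Finset.subset_union_left)

lemma closure_insert_one' {G : Type*} [Group G] (s : Set G) :
    Subgroup.closure (insert (1 : G) s) = Subgroup.closure s :=
  le_antisymm
    (Subgroup.closure_le _ |>.2 (Set.insert_subset (one_mem _) Subgroup.subset_closure))
    (Subgroup.closure_mono (Set.subset_insert _ _))

lemma prod_symmGen {A B : Type*} [Group A] [Group B] [DecidableEq A] [DecidableEq B]
    {S : Finset A} {T : Finset B} (hS : IsSymmGen S) (hT : IsSymmGen T) :
    IsSymmGen ((insert 1 S) ×ˢ (insert 1 T)) := by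
  constructor
  · rintro ⟨x, y⟩ hxy
    rw [Finset.mem_product] at hxy ⊢
    obtain ⟨hx, hy⟩ := hxy
    constructor
    · rcases Finset.mem_insert.1 hx with h | h
      · rw [show x = 1 from h]; simp
      · exact Finset.mem_insert_of_mem (hS.1 _ h)
    · rcases Finset.mem_insert.1 hy with h | h
      · rw [show y = 1 from h]; simp
      · exact Finset.mem_insert_of_mem (hT.1 _ h)
  · rw [Finset.coe_product, Subgroup.closure_prod (by simp) (by simp),
      Finset.coe_insert, Finset.coe_insert, closure_insert_one', closure_insert_one',
      hS.2, hT.2]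
    exact Subgroup.top_prod_top

/-- For `G = A × B`, `G_bound ⊆ A_bound × B_bound`. -/
theorem stmt2 (A B : Type*) [Group A] [Group B] [Group.FG A] [Group.FG B] :
    ∀ p ∈ GBound (A × B), p.1 ∈ GBound A ∧ p.2 ∈ GBound B := by
  classical
  rintro p ⟨M, hM0, hM⟩
  obtain ⟨T, hT⟩ := symmGen_of_FG B
  obtain ⟨S₀, hS₀⟩ := symmGen_of_FG A
  constructor
  · refine ⟨M, hM0, fun S hS => ?_⟩
    have hS' := prod_symmGen hS hT
    have hle := hM _ hS'
    have hmem := sInf_mem_wordset hS' p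
    have := wordLen_le_of_hom (MonoidHom.fst A B) _ S
      (fun x hx => by
        rw [Finset.mem_product] at hx
        simpa using hx.1) hmem
    exact le_trans this hle
  · refine ⟨M, hM0, fun S hS => ?_⟩
    have hS' := prod_symmGen hS₀ hS
    have hle := hM _ hS'
    have hmem := sInf_mem_wordset hS' p
    have := wordLen_le_of_hom (MonoidHom.snd A B) _ S
      (fun x hx => by
        rw [Finset.mem_product] at hx
        simpa using hx.2) hmem
    exact le_trans this hle
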